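/- Let G be a group. Then: (1) the commutator subgroup of the pseudocentre is contained in the second derived subgroup of G, i.e. ⁅P(G), P(G)⁆ ≤ G'' = ⁅⁅G,G⁆,⁅G,G⁆⁆; (2) for any subgroups K ≤ H of G with ⁅H, ⁅G,G⁆⁆ ≤ K, one has ⁅H, P(G)⁆ ≤ K; in particular the centralizer of G' = ⁅G,G⁆ in G is contained in the centralizer of P(G) in G, and P(G) centralizes the second centre Z₂(G) (the second term of the upper central series of G). -/

import Mathlib

/-- The pseudocentre of a group `G`: the intersection of the normal closures of the
centralizers of the elements of `G`. -/
def P (G : Type*) [Group G] : Subgroup G :=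
  ⨅ g : G, Subgroup.normalClosure ↑(Subgroup.centralizer {g})

section PseudoAux

variable {G : Type*} [Group G]
open scoped commutatorElement IsMulCommutative

lemma pseudo_sup_normal (g : G) : (commutator G ⊔ Subgroup.centralizer {g}).Normal := by
  constructor
  intro x hx n
  rw [← SetLike.mem_coe, Subgroup.normal_mul] at hx ⊢
  obtain ⟨u, hu, c, hc, rfl⟩ := hx
  refine ⟨n * u * n⁻¹ * ⁅n, c⁆, ?_, c, hc, by group⟩
  exact mul_mem ((Subgroup.Normal.conj_mem inferInstance u hu n))
    (Subgroup.commutator_mem_commutator (Subgroup.mem_top n) (Subgroup.mem_top c))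

/-- Every element of the pseudocentre factors as `u * c` with `u ∈ G'` and `c ∈ C_G(g)`. -/
lemma P_decomp (g : G) {x : G} (hx : x ∈ P G) :
    ∃ u ∈ commutator G, ∃ c ∈ Subgroup.centralizer {g}, x = u * c := by
  have hx' : ∀ h : G, x ∈ Subgroup.normalClosure ↑(Subgroup.centralizer ({h} : Set G)) := by
    simpa [P, Subgroup.mem_iInf] using hx
  haveI hn := pseudo_sup_normal (G := G) g
  have hle : Subgroup.normalClosure ↑(Subgroup.centralizer ({g} : Set G)) ≤
      commutator G ⊔ Subgroup.centralizer {g} :=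
    Subgroup.normalClosure_le_normal (SetLike.coe_subset_coe.mpr le_sup_right)
  have h2 : x ∈ commutator G ⊔ Subgroup.centralizer {g} := hle (hx' g)
  rw [← SetLike.mem_coe, Subgroup.normal_mul] at h2
  obtain ⟨u, hu, c, hc, rfl⟩ := h2
  exact ⟨u, hu, c, hc, rfl⟩

lemma comm_absorb_right {x u c : G} (hc : x * c = c * x) : ⁅x, u * c⁆ = ⁅x, u⁆ := by
  have h : Commute x c := hc
  have h2 : c * x⁻¹ = x⁻¹ * c := h.inv_left.eq.symm
  simp only [commutatorElement_def, mul_inv_rev, mul_assoc]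
  rw [← mul_assoc c x⁻¹, h2]
  group

lemma comm_absorb_left {x u c : G} (hc : u * c = c * u) : ⁅x * c, u⁆ = ⁅x, u⁆ := by
  have h2 : c * u = u * c := hc.symm
  simp only [commutatorElement_def, mul_inv_rev, mul_assoc]
  rw [← mul_assoc c u, h2]
  group

lemma Z2_comm_commutator {z : G} (hz : z ∈ upperCentralSeries G 2) :
    ∀ u ∈ commutator G, ⁅z, u⁆ = 1 := by
  have hz' : ∀ y : G, z * y * z⁻¹ * y⁻¹ ∈ Subgroup.center G := by
    intro y
    have := mem_upperCentralSeries_succ_iff.mp hz y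
    rwa [upperCentralSeries_one] at this
  let φ : G →* Subgroup.center G :=
    { toFun := fun g => ⟨z * g * z⁻¹ * g⁻¹, hz' g⟩
      map_one' := by ext; simp
      map_mul' := fun a b => by
        ext
        show z*(a*b)*z⁻¹*(a*b)⁻¹ = (z*a*z⁻¹*a⁻¹)*(z*b*z⁻¹*b⁻¹)
        have h := Subgroup.mem_center_iff.mp (hz' b) a⁻¹
        simp only [mul_inv_rev, mul_assoc]
        rw [← mul_assoc a⁻¹ z, ← mul_assoc (a⁻¹*z) b, ← mul_assoc (a⁻¹*z*b) z⁻¹,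
          show a⁻¹*z*b*z⁻¹*b⁻¹ = a⁻¹*(z*b*z⁻¹*b⁻¹) by group, h]
        group }
  intro u hu
  have hk := MonoidHom.mem_ker.mp (Abelianization.commutator_subset_ker φ hu)
  have h1 : z*u*z⁻¹*u⁻¹ = 1 := by
    have := congrArg Subtype.val hk
    simpa [φ] using this
  simpa [commutatorElement_def] using h1

end PseudoAux

/-- (1) `⁅P G, P G⁆ ≤ G''`; (2) every `G'`-central section of `G` is centralized by
`P G`; in particular `C_G(G') ≤ C_G(P G)` and `P G` centralizes `Z₂(G)`. -/
theorem pseudocentre_derived {G : Type*} [Group G] :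
    ⁅P G, P G⁆ ≤ derivedSeries G 2 ∧
    (∀ H K : Subgroup G, K ≤ H → ⁅H, commutator G⁆ ≤ K → ⁅H, P G⁆ ≤ K) ∧
    Subgroup.centralizer (commutator G : Set G) ≤ Subgroup.centralizer (P G : Set G) ∧
    P G ≤ Subgroup.centralizer (upperCentralSeries G 2 : Set G) := by
  have part2 : ∀ H K : Subgroup G, K ≤ H → ⁅H, commutator G⁆ ≤ K → ⁅H, P G⁆ ≤ K := by
    intro H K _ hHK
    rw [Subgroup.commutator_le]
    intro h hh x hx
    obtain ⟨u, hu, c, hc, rfl⟩ := P_decomp h hx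
    have hcc : h * c = c * h := Subgroup.mem_centralizer_iff.mp hc h rfl
    rw [comm_absorb_right hcc]
    exact hHK (Subgroup.commutator_mem_commutator hh hu)
  refine ⟨?_, part2, ?_, ?_⟩
  · rw [Subgroup.commutator_le]
    intro x hx y hy
    obtain ⟨u, hu, c, hc, rfl⟩ := P_decomp x hy
    rw [comm_absorb_right (Subgroup.mem_centralizer_iff.mp hc x rfl)]
    obtain ⟨u', hu', c', hc', rfl⟩ := P_decomp u hx
    rw [comm_absorb_left (Subgroup.mem_centralizer_iff.mp hc' u rfl)]
    have h2 : derivedSeries G 2 = ⁅commutator G, commutator G⁆ := by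
      rw [show (2 : ℕ) = 1 + 1 from rfl, derivedSeries_succ, derivedSeries_one]
    rw [h2]
    exact Subgroup.commutator_mem_commutator hu' hu
  · have h0 : ⁅Subgroup.centralizer (commutator G : Set G), commutator G⁆ ≤ ⊥ := by
      rw [Subgroup.commutator_le]
      intro a ha b hb
      have h := Subgroup.mem_centralizer_iff.mp ha b hb
      rw [Subgroup.mem_bot, commutatorElement_eq_one_iff_mul_comm]
      exact h.symm
    have hP := part2 _ ⊥ bot_le h0
    rw [Subgroup.commutator_le] at hP
    intro z hz
    rw [Subgroup.mem_centralizer_iff]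
    intro x hx
    have := hP z hz x hx
    rw [Subgroup.mem_bot, commutatorElement_eq_one_iff_mul_comm] at this
    exact this.symm
  · have h0 : ⁅upperCentralSeries G 2, commutator G⁆ ≤ ⊥ := by
      rw [Subgroup.commutator_le]
      intro z hz u hu
      rw [Subgroup.mem_bot]
      exact Z2_comm_commutator hz u hu
    have hP := part2 _ ⊥ bot_le h0
    rw [Subgroup.commutator_le] at hP
    intro x hx
    rw [Subgroup.mem_centralizer_iff]
    intro z hz
    have := hP z hz x hx
    rw [Subgroup.mem_bot, commutatorElement_eq_one_iff_mul_comm] at this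
    exact this
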